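/- Let η ≥ 0 and set H_η(z) = log z + (3/2) η z^{2/3} and R_η(z) = z/(1 + η z^{2/3}) for z > 0 (extended by R_η(z) = z for z ≤ 0). Suppose x, y : (−∞,0] → ℝ are differentiable, satisfy x'(s) = y(s) − x(s) and y'(s) = 2 y(s) − e^{2s} R_η(e^{−2s} y(s)) x(s) for all s ≤ 0, satisfy x(s) > 0 and y(s) > 0 for all s ≤ 0, and suppose e^{−2s} y(s) → P and e^{−2s} x(s) → P/3 as s → −∞, for some P > 0. Then, with m := x(0), one has 2 H_η(P) − R_η(P) · m ≤ m + 2 H_η(3m). -/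

import Mathlib

open Real Filter Set

/-- The simplified Fermi–Dirac nonlinearity `R_η(z) = z/(1 + η z^{2/3})` for
`z > 0`, extended by `R_η(z) = z` for `z ≤ 0`. -/
noncomputable def Rfun (η z : ℝ) : ℝ :=
  if 0 < z then z / (1 + η * z ^ ((2 : ℝ) / 3)) else z

/-- The enthalpy `H_η(z) = log z + (3/2) η z^{2/3}`. -/
noncomputable def Hfun (η z : ℝ) : ℝ :=
  Real.log z + 3 / 2 * η * z ^ ((2 : ℝ) / 3)

lemma aux_denom_pos {η z : ℝ} (hη : 0 ≤ η) (hz : 0 ≤ z) :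
    0 < 1 + η * z ^ ((2 : ℝ) / 3) := by
  have := mul_nonneg hη (Real.rpow_nonneg hz ((2:ℝ)/3))
  linarith

lemma Rfun_pos {η z : ℝ} (hη : 0 ≤ η) (hz : 0 < z) : 0 < Rfun η z := by
  rw [Rfun, if_pos hz]
  exact div_pos hz (aux_denom_pos hη hz.le)

lemma Rfun_mono {η : ℝ} (hη : 0 ≤ η) {a b : ℝ} (ha : 0 < a) (hab : a ≤ b) :
    Rfun η a ≤ Rfun η b := by
  have hb : 0 < b := lt_of_lt_of_le ha hab
  have hra : (0:ℝ) ≤ a ^ ((2:ℝ)/3) := Real.rpow_nonneg ha.le _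
  have hrb : (0:ℝ) ≤ b ^ ((2:ℝ)/3) := Real.rpow_nonneg hb.le _
  rw [Rfun, Rfun, if_pos ha, if_pos hb,
    div_le_div_iff₀ (aux_denom_pos hη ha.le) (aux_denom_pos hη hb.le)]
  have h1 : a = a ^ ((1:ℝ)/3) * a ^ ((2:ℝ)/3) := by
    rw [← Real.rpow_add ha]; norm_num
  have h2 : b = b ^ ((1:ℝ)/3) * b ^ ((2:ℝ)/3) := by
    rw [← Real.rpow_add hb]; norm_num
  have h3 : a ^ ((1:ℝ)/3) ≤ b ^ ((1:ℝ)/3) :=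
    Real.rpow_le_rpow ha.le hab (by norm_num)
  have key : a * b ^ ((2:ℝ)/3) ≤ b * a ^ ((2:ℝ)/3) := by
    have e1 : a * b ^ ((2:ℝ)/3) = a ^ ((1:ℝ)/3) * (a ^ ((2:ℝ)/3) * b ^ ((2:ℝ)/3)) := by
      conv_lhs => rw [h1]
      ring
    have e2 : b * a ^ ((2:ℝ)/3) = b ^ ((1:ℝ)/3) * (a ^ ((2:ℝ)/3) * b ^ ((2:ℝ)/3)) := by
      conv_lhs => rw [h2]
      ring
    rw [e1, e2]
    exact mul_le_mul_of_nonneg_right h3 (mul_nonneg hra hrb)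
  nlinarith [mul_le_mul_of_nonneg_left key hη]

lemma Hfun_mono {η : ℝ} (hη : 0 ≤ η) {a b : ℝ} (ha : 0 < a) (hab : a ≤ b) :
    Hfun η a ≤ Hfun η b := by
  unfold Hfun
  have h1 : Real.log a ≤ Real.log b := Real.log_le_log ha hab
  have h2 : a ^ ((2:ℝ)/3) ≤ b ^ ((2:ℝ)/3) :=
    Real.rpow_le_rpow ha.le hab (by norm_num)
  nlinarith [mul_le_mul_of_nonneg_left h2 hη]

lemma Hfun_hasDerivAt {η z : ℝ} (hz : 0 < z) :
    HasDerivAt (Hfun η) (z⁻¹ + η * z ^ (-(1:ℝ)/3)) z := by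
  have h1 : HasDerivAt Real.log z⁻¹ z := Real.hasDerivAt_log hz.ne'
  have h2 : HasDerivAt (fun w : ℝ => w ^ ((2:ℝ)/3)) ((2:ℝ)/3 * z ^ ((2:ℝ)/3 - 1)) z :=
    Real.hasDerivAt_rpow_const (Or.inl hz.ne')
  have h3 := h1.add (h2.const_mul (3 / 2 * η))
  have he : (2:ℝ)/3 - 1 = -(1:ℝ)/3 := by norm_num
  rw [he] at h3
  refine h3.congr_deriv (Eq.symm ?_)
  ring

lemma Hderiv_mul_R {η z : ℝ} (hη : 0 ≤ η) (hz : 0 < z) :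
    (z⁻¹ + η * z ^ (-(1:ℝ)/3)) * Rfun η z = 1 := by
  rw [Rfun, if_pos hz]
  have hd : (0:ℝ) < 1 + η * z ^ ((2:ℝ)/3) := aux_denom_pos hη hz.le
  have hzz : z ^ (-(1:ℝ)/3) * z = z ^ ((2:ℝ)/3) := by
    have h := Real.rpow_add hz (-(1:ℝ)/3) 1
    rw [Real.rpow_one] at h
    rw [← h]; norm_num
  have hnum : (z⁻¹ + η * z ^ (-(1:ℝ)/3)) * z = 1 + η * z ^ ((2:ℝ)/3) := by
    rw [add_mul, inv_mul_cancel₀ hz.ne', mul_assoc, hzz]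
  calc (z⁻¹ + η * z ^ (-(1:ℝ)/3)) * (z / (1 + η * z ^ ((2:ℝ)/3)))
      = ((z⁻¹ + η * z ^ (-(1:ℝ)/3)) * z) / (1 + η * z ^ ((2:ℝ)/3)) := by ring
    _ = (1 + η * z ^ ((2:ℝ)/3)) / (1 + η * z ^ ((2:ℝ)/3)) := by rw [hnum]
    _ = 1 := div_self hd.ne'

lemma monoOn_Iic_of_deriv {f f' : ℝ → ℝ}
    (hf : ∀ s ≤ (0:ℝ), HasDerivWithinAt f (f' s) (Set.Iic 0) s)
    (h0 : ∀ s ≤ (0:ℝ), 0 ≤ f' s) : MonotoneOn f (Set.Iic 0) := by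
  apply monotoneOn_of_deriv_nonneg (convex_Iic 0)
  · exact fun s hs => (hf s hs).continuousWithinAt
  · rw [interior_Iic]
    exact fun s hs =>
      (((hf s (le_of_lt hs)).hasDerivAt (Iic_mem_nhds hs)).differentiableAt).differentiableWithinAt
  · rw [interior_Iic]
    intro s hs
    rw [((hf s (le_of_lt hs)).hasDerivAt (Iic_mem_nhds hs)).deriv]
    exact h0 s (le_of_lt hs)

lemma antiOn_Iic_of_deriv {f f' : ℝ → ℝ}
    (hf : ∀ s ≤ (0:ℝ), HasDerivWithinAt f (f' s) (Set.Iic 0) s)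
    (h0 : ∀ s ≤ (0:ℝ), f' s ≤ 0) : AntitoneOn f (Set.Iic 0) := by
  apply antitoneOn_of_deriv_nonpos (convex_Iic 0)
  · exact fun s hs => (hf s hs).continuousWithinAt
  · rw [interior_Iic]
    exact fun s hs =>
      (((hf s (le_of_lt hs)).hasDerivAt (Iic_mem_nhds hs)).differentiableAt).differentiableWithinAt
  · rw [interior_Iic]
    intro s hs
    rw [((hf s (le_of_lt hs)).hasDerivAt (Iic_mem_nhds hs)).deriv]
    exact h0 s (le_of_lt hs)

/-- for a positive trajectory of the simplified Fermi–Dirac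
system (`η ≥ 0`) on `(−∞,0]` with `e^{−2s} y → P > 0` and `e^{−2s} x → P/3`
as `s → −∞`, the normalized mass `m = x(0)` satisfies
`2 H_η(P) − R_η(P) m ≤ m + 2 H_η(3m)`. -/
theorem mass_sup_norm_estimate (η : ℝ) (hη : 0 ≤ η) (P : ℝ) (hP : 0 < P)
    (x y : ℝ → ℝ)
    (hx : ∀ s ≤ (0 : ℝ), HasDerivWithinAt x (y s - x s) (Set.Iic 0) s)
    (hy : ∀ s ≤ (0 : ℝ), HasDerivWithinAt y
      (2 * y s - Real.exp (2 * s) * Rfun η (Real.exp (-2 * s) * y s) * x s)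
      (Set.Iic 0) s)
    (hpos : ∀ s ≤ (0 : ℝ), 0 < x s ∧ 0 < y s)
    (hylim : Filter.Tendsto (fun s => Real.exp (-2 * s) * y s) Filter.atBot (nhds P))
    (hxlim : Filter.Tendsto (fun s => Real.exp (-2 * s) * x s) Filter.atBot (nhds (P / 3))) :
    2 * Hfun η P - Rfun η P * x 0 ≤ x 0 + 2 * Hfun η (3 * x 0) := by
  have hm0 : 0 < x 0 := (hpos 0 le_rfl).1
  have hy00 : 0 < y 0 := (hpos 0 le_rfl).2
  have hρpos : ∀ s ≤ (0:ℝ), 0 < Real.exp (-2 * s) * y s :=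
    fun s hs => mul_pos (Real.exp_pos _) (hpos s hs).2
  -- derivative of ρ(s) = exp(-2s) y(s)
  have hρd : ∀ s ≤ (0:ℝ), HasDerivWithinAt (fun s => Real.exp (-2 * s) * y s)
      (-(Rfun η (Real.exp (-2 * s) * y s) * x s)) (Set.Iic 0) s := by
    intro s hs
    have h0 : HasDerivAt (fun s : ℝ => -2 * s) (-2) s := by
      simpa using (hasDerivAt_id s).const_mul (-2)
    have he : HasDerivAt (fun s : ℝ => Real.exp (-2 * s)) (Real.exp (-2 * s) * (-2)) s := h0.exp
    have hmul := he.hasDerivWithinAt.mul (hy s hs)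
    refine hmul.congr_deriv (Eq.symm ?_)
    have hee : Real.exp (-2 * s) * Real.exp (2 * s) = 1 := by
      rw [← Real.exp_add, show (-2 : ℝ) * s + 2 * s = 0 by ring, Real.exp_zero]
    linear_combination (Rfun η (Real.exp (-2 * s) * y s) * x s) * hee
  -- ρ is antitone, hence ρ(s) ≤ P
  have hρanti : AntitoneOn (fun s => Real.exp (-2 * s) * y s) (Set.Iic 0) := by
    apply antiOn_Iic_of_deriv hρd
    intro s hs
    have := mul_pos (Rfun_pos hη (hρpos s hs)) (hpos s hs).1
    linarith
  have hρleP : ∀ s ≤ (0:ℝ), Real.exp (-2 * s) * y s ≤ P := by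
    intro s hs
    refine ge_of_tendsto hylim ?_
    filter_upwards [eventually_le_atBot s] with a ha
    exact hρanti (Set.mem_Iic.2 (ha.trans hs)) (Set.mem_Iic.2 hs) ha
  -- exp(s) x(s) ≤ x 0
  have hexm : ∀ s ≤ (0:ℝ), Real.exp s * x s ≤ x 0 := by
    have hder : ∀ s ≤ (0:ℝ), HasDerivWithinAt (fun s => Real.exp s * x s)
        (Real.exp s * y s) (Set.Iic 0) s := by
      intro s hs
      have := (Real.hasDerivAt_exp s).hasDerivWithinAt.mul (hx s hs)
      refine this.congr_deriv (Eq.symm ?_)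
      ring
    have hmono := monoOn_Iic_of_deriv hder
      (fun s hs => mul_nonneg (Real.exp_pos s).le (hpos s hs).2.le)
    intro s hs
    have := hmono (Set.mem_Iic.2 hs) (Set.mem_Iic.2 le_rfl) hs
    simpa [Real.exp_zero] using this
  -- y ≤ 3x
  have hy3x : ∀ s ≤ (0:ℝ), y s ≤ 3 * x s := by
    have hud : ∀ s ≤ (0:ℝ), HasDerivWithinAt (fun s => Real.exp s * (y s - 3 * x s))
        (-(Real.exp (3 * s) * (Rfun η (Real.exp (-2 * s) * y s) * x s))) (Set.Iic 0) s := by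
      intro s hs
      have := (Real.hasDerivAt_exp s).hasDerivWithinAt.mul
        ((hy s hs).sub ((hx s hs).const_mul 3))
      refine this.congr_deriv (Eq.symm ?_)
      have hee3 : Real.exp s * Real.exp (2 * s) = Real.exp (3 * s) := by
        rw [← Real.exp_add, show s + 2 * s = 3 * s by ring]
      simp only [Pi.sub_apply]
      linear_combination (Rfun η (Real.exp (-2 * s) * y s) * x s) * hee3
    have huanti : AntitoneOn (fun s => Real.exp s * (y s - 3 * x s)) (Set.Iic 0) := by
      apply antiOn_Iic_of_deriv hud
      intro s hs
      have := mul_pos (Real.exp_pos (3 * s))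
        (mul_pos (Rfun_pos hη (hρpos s hs)) (hpos s hs).1)
      linarith
    have hulim : Tendsto (fun a => Real.exp a * (y a - 3 * x a)) atBot (nhds 0) := by
      have h1 : Tendsto (fun a : ℝ => Real.exp (3 * a)) atBot (nhds 0) :=
        Real.tendsto_exp_atBot.comp (tendsto_id.const_mul_atBot (by norm_num : (0:ℝ) < 3))
      have h2 : Tendsto (fun a => Real.exp (-2 * a) * y a - 3 * (Real.exp (-2 * a) * x a))
          atBot (nhds (P - 3 * (P / 3))) := hylim.sub (hxlim.const_mul 3)
      have h3 := h1.mul h2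
      have he : (fun a => Real.exp (3 * a) *
          (Real.exp (-2 * a) * y a - 3 * (Real.exp (-2 * a) * x a)))
          = fun a => Real.exp a * (y a - 3 * x a) := by
        funext a
        have h0 : Real.exp (3 * a) * Real.exp (-2 * a) = Real.exp a := by
          rw [← Real.exp_add, show (3:ℝ) * a + -2 * a = a by ring]
        linear_combination (y a - 3 * x a) * h0
      rw [he] at h3
      simpa using h3
    intro s hs
    have hle : Real.exp s * (y s - 3 * x s) ≤ 0 := by
      refine ge_of_tendsto hulim ?_
      filter_upwards [eventually_le_atBot s] with a ha
      exact huanti (Set.mem_Iic.2 (ha.trans hs)) (Set.mem_Iic.2 hs) ha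
    nlinarith [Real.exp_pos s]
  -- derivative of H(ρ(s))
  have hHd : ∀ s ≤ (0:ℝ), HasDerivWithinAt (fun s => Hfun η (Real.exp (-2 * s) * y s))
      (-(x s)) (Set.Iic 0) s := by
    intro s hs
    have hz := hρpos s hs
    have hd := (Hfun_hasDerivAt (η := η) hz).comp_hasDerivWithinAt s (hρd s hs)
    refine hd.congr_deriv (Eq.symm ?_)
    have := Hderiv_mul_R hη hz
    linear_combination (x s) * this
  -- the Lyapunov function V
  have hVd : ∀ s ≤ (0:ℝ), HasDerivWithinAt
      (fun s => 2 * Hfun η (Real.exp (-2 * s) * y s) + y s - 2 * x s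
        + Rfun η P * x 0 * Real.exp s)
      (Rfun η P * x 0 * Real.exp s
        - Real.exp (2 * s) * Rfun η (Real.exp (-2 * s) * y s) * x s) (Set.Iic 0) s := by
    intro s hs
    have h1 := ((((hHd s hs).const_mul 2).add (hy s hs)).sub ((hx s hs).const_mul 2)).add
      (((Real.hasDerivAt_exp s).const_mul (Rfun η P * x 0)).hasDerivWithinAt)
    refine h1.congr_deriv (Eq.symm ?_)
    ring
  have hVnonneg : ∀ s ≤ (0:ℝ), 0 ≤ Rfun η P * x 0 * Real.exp s
      - Real.exp (2 * s) * Rfun η (Real.exp (-2 * s) * y s) * x s := by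
    intro s hs
    have hRm : Rfun η (Real.exp (-2 * s) * y s) ≤ Rfun η P :=
      Rfun_mono hη (hρpos s hs) (hρleP s hs)
    have hxm := hexm s hs
    have h2s : Real.exp (2 * s) = Real.exp s * Real.exp s := by
      rw [← Real.exp_add, show s + s = 2 * s by ring]
    have hkey : Rfun η (Real.exp (-2 * s) * y s) * (Real.exp s * x s)
        ≤ Rfun η P * x 0 :=
      mul_le_mul hRm hxm (mul_nonneg (Real.exp_pos s).le (hpos s hs).1.le)
        (Rfun_pos hη hP).le
    have := mul_le_mul_of_nonneg_left hkey (Real.exp_pos s).le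
    rw [h2s]
    nlinarith [Real.exp_pos s]
  have hVmono := monoOn_Iic_of_deriv hVd hVnonneg
  -- limit of V at -∞
  have hHc : Tendsto (fun a => Hfun η (Real.exp (-2 * a) * y a)) atBot (nhds (Hfun η P)) := by
    have hc : ContinuousAt (Hfun η) P := by
      unfold Hfun
      exact (Real.continuousAt_log hP.ne').add
        (continuousAt_const.mul (Real.continuousAt_rpow_const P ((2:ℝ)/3) (Or.inl hP.ne')))
    exact hc.tendsto.comp hylim
  have hytend : Tendsto y atBot (nhds 0) := by
    have h1 : Tendsto (fun a : ℝ => Real.exp (2 * a)) atBot (nhds 0) :=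
      Real.tendsto_exp_atBot.comp (tendsto_id.const_mul_atBot (by norm_num : (0:ℝ) < 2))
    have h3 := h1.mul hylim
    have he : (fun a => Real.exp (2 * a) * (Real.exp (-2 * a) * y a)) = y := by
      funext a
      have h0 : Real.exp (2 * a) * Real.exp (-2 * a) = 1 := by
        rw [← Real.exp_add, show (2:ℝ) * a + -2 * a = 0 by ring, Real.exp_zero]
      linear_combination (y a) * h0
    rw [he] at h3
    simpa using h3
  have hxtend : Tendsto x atBot (nhds 0) := by
    have h1 : Tendsto (fun a : ℝ => Real.exp (2 * a)) atBot (nhds 0) :=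
      Real.tendsto_exp_atBot.comp (tendsto_id.const_mul_atBot (by norm_num : (0:ℝ) < 2))
    have h3 := h1.mul hxlim
    have he : (fun a => Real.exp (2 * a) * (Real.exp (-2 * a) * x a)) = x := by
      funext a
      have h0 : Real.exp (2 * a) * Real.exp (-2 * a) = 1 := by
        rw [← Real.exp_add, show (2:ℝ) * a + -2 * a = 0 by ring, Real.exp_zero]
      linear_combination (x a) * h0
    rw [he] at h3
    simpa using h3
  have hVt : Tendsto (fun a => 2 * Hfun η (Real.exp (-2 * a) * y a) + y a - 2 * x a
      + Rfun η P * x 0 * Real.exp a) atBot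
      (nhds (2 * Hfun η P + 0 - 2 * 0 + Rfun η P * x 0 * 0)) :=
    (((hHc.const_mul 2).add hytend).sub (hxtend.const_mul 2)).add
      (Real.tendsto_exp_atBot.const_mul (Rfun η P * x 0))
  have hVt' : Tendsto (fun a => 2 * Hfun η (Real.exp (-2 * a) * y a) + y a - 2 * x a
      + Rfun η P * x 0 * Real.exp a) atBot (nhds (2 * Hfun η P)) := by
    convert hVt using 2
    ring
  -- conclusion
  have hVle : 2 * Hfun η P ≤ 2 * Hfun η (Real.exp (-2 * 0) * y 0) + y 0 - 2 * x 0
      + Rfun η P * x 0 * Real.exp 0 := by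
    refine le_of_tendsto hVt' ?_
    filter_upwards [eventually_le_atBot (0:ℝ)] with a ha
    exact hVmono (Set.mem_Iic.2 ha) (Set.mem_Iic.2 le_rfl) ha
  rw [show (-2:ℝ) * 0 = 0 by ring, Real.exp_zero, one_mul, mul_one] at hVle
  have hy30 : y 0 ≤ 3 * x 0 := hy3x 0 le_rfl
  have hH30 : Hfun η (y 0) ≤ Hfun η (3 * x 0) := Hfun_mono hη hy00 hy30
  linarith
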